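/- For every natural number $k \ge 1$ and real $p$ with $0 < p < 1$: $\frac{1}{k!}\left(\frac{p}{1-p}\right)^k \sum_{j=0}^{k} \left\langle {k \atop j} \right\rangle p^{-j} = \sum_{\mathbf{m} \in R(k)} \binom{m_1+\cdots+m_k}{m_1,\dots,m_k} (1-p)^{-|\mathbf{m}|} \prod_{j=1}^{k} \frac{p^{m_j}}{(j!)^{m_j}}$, where $R(k) = \{\mathbf{m} \in \mathbb{N}^k : 1\cdot m_1 + 2\cdot m_2 + \cdots + k\cdot m_k = k\}$, $|\mathbf{m}| = m_1 + \cdots + m_k$, and $\left\langle {k \atop j} \right\rangle$ denotes the Eulerian number counting permutations of $\{1,\dots,k\}$ with exactly $j$ ascents. -/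

import Mathlib

open Finset
open Fin.NatCast


private lemma sum_single_eq {β : Type*} [Fintype β] [DecidableEq β] (k : β → ℕ) :
    (∑ y : β, Finsupp.single y (k y)) = Finsupp.equivFunOnFinite.symm k := by
  ext z
  rw [Finset.sum_apply']
  simp [Finsupp.single_apply]

private lemma prod_X_pow {β : Type*} [Fintype β] [DecidableEq β] (k : β → ℕ) :
    (∏ y : β, (MvPolynomial.X y : MvPolynomial β ℕ) ^ k y)
      = MvPolynomial.monomial (Finsupp.equivFunOnFinite.symm k) 1 := by
  classical
  set d : β →₀ ℕ := Finsupp.equivFunOnFinite.symm k with hd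
  have h1 : (∏ y : β, (MvPolynomial.X y : MvPolynomial β ℕ) ^ k y)
      = ∏ y ∈ d.support, (MvPolynomial.X y : MvPolynomial β ℕ) ^ d y := by
    have hkd : (fun y => (MvPolynomial.X y : MvPolynomial β ℕ) ^ k y)
        = fun y => (MvPolynomial.X y : MvPolynomial β ℕ) ^ d y := rfl
    rw [show (∏ y : β, (MvPolynomial.X y : MvPolynomial β ℕ) ^ k y)
        = ∏ y : β, (MvPolynomial.X y : MvPolynomial β ℕ) ^ d y from by rw [hkd]]
    refine (Finset.prod_subset (Finset.subset_univ d.support) ?_).symm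
    intro y _ hy
    rw [Finsupp.notMem_support_iff.1 hy, pow_zero]
  rw [h1, MvPolynomial.prod_X_pow_eq_monomial]

private lemma expand_pow_card {α β : Type*} [Fintype α] [Fintype β]
    [DecidableEq α] [DecidableEq β] :
    ((∑ y : β, (MvPolynomial.X y : MvPolynomial β ℕ)) ^ Fintype.card α)
      = ∑ f : α → β, ∏ x : α, (MvPolynomial.X (f x) : MvPolynomial β ℕ) := by
  rw [← Finset.card_univ (α := α), ← Finset.prod_const, Finset.prod_univ_sum]
  rw [Fintype.piFinset_univ]

/-- Number of functions with prescribed fiber cardinalities is a multinomial coefficient. -/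
private lemma card_count_eq_multinomial {α β : Type*} [Fintype α] [Fintype β]
    [DecidableEq α] [DecidableEq β] (b : β → ℕ) (hb : ∑ y : β, b y = Fintype.card α) :
    ((univ : Finset (α → β)).filter
        fun f => ∀ y, ((univ : Finset α).filter fun x => f x = y).card = b y).card
      = Nat.multinomial univ b := by
  classical
  set cnt : (α → β) → (β → ℕ) := fun f y => ((univ : Finset α).filter fun x => f x = y).card
    with hcnt
  set T := Finset.piAntidiag (univ : Finset β) (Fintype.card α) with hT
  have hcnt_mem : ∀ f : α → β, f ∈ (univ : Finset (α → β)) → cnt f ∈ T := by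
    intro f _
    rw [hT, Finset.mem_piAntidiag]
    refine ⟨?_, fun i _ => mem_univ i⟩
    rw [← Finset.card_univ (α := α)]
    exact (Finset.card_eq_sum_card_fiberwise (fun x _ => mem_univ (f x))).symm
  have e1 : ((∑ y : β, (MvPolynomial.X y : MvPolynomial β ℕ)) ^ Fintype.card α)
      = ∑ k ∈ T, (((univ : Finset (α → β)).filter fun f => cnt f = k).card : MvPolynomial β ℕ)
            * ∏ y : β, (MvPolynomial.X y : MvPolynomial β ℕ) ^ k y := by
    rw [expand_pow_card, ← Finset.sum_fiberwise_of_maps_to hcnt_mem]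
    refine Finset.sum_congr rfl fun k _ => ?_
    have : ∀ f ∈ (univ : Finset (α → β)).filter fun f => cnt f = k,
        (∏ x : α, (MvPolynomial.X (f x) : MvPolynomial β ℕ))
          = ∏ y : β, (MvPolynomial.X y : MvPolynomial β ℕ) ^ k y := by
      intro f hf
      rw [Finset.mem_filter] at hf
      rw [← Finset.prod_fiberwise_of_maps_to (fun x _ => mem_univ (f x))
        (fun x => (MvPolynomial.X (f x) : MvPolynomial β ℕ))]
      refine Finset.prod_congr rfl fun y _ => ?_
      have : ∀ x ∈ (univ : Finset α).filter fun x => f x = y,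
          (MvPolynomial.X (f x) : MvPolynomial β ℕ) = MvPolynomial.X y := by
        intro x hx
        rw [Finset.mem_filter] at hx
        rw [hx.2]
      rw [Finset.prod_congr rfl this, Finset.prod_const, ← hf.2]
    rw [Finset.sum_congr rfl this, Finset.sum_const, nsmul_eq_mul]
  have e2 : ((∑ y : β, (MvPolynomial.X y : MvPolynomial β ℕ)) ^ Fintype.card α)
      = ∑ k ∈ T, ((Nat.multinomial univ k : ℕ) : MvPolynomial β ℕ)
            * ∏ y : β, (MvPolynomial.X y : MvPolynomial β ℕ) ^ k y := by
    rw [Finset.sum_pow_eq_sum_piAntidiag_of_commute _ _ (fun _ _ _ _ _ => Commute.all _ _)]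
    refine Finset.sum_congr rfl fun k _ => ?_
    rw [Finset.noncommProd_eq_prod]
  -- extract the coefficient at the monomial associated to b
  have hbT : b ∈ T := by
    rw [hT, Finset.mem_piAntidiag]
    exact ⟨hb, fun i _ => mem_univ i⟩
  have key : ∀ c : (β → ℕ) → ℕ,
      MvPolynomial.coeff (Finsupp.equivFunOnFinite.symm b)
        (∑ k ∈ T, ((c k : ℕ) : MvPolynomial β ℕ)
          * ∏ y : β, (MvPolynomial.X y : MvPolynomial β ℕ) ^ k y) = c b := by
    intro c
    rw [MvPolynomial.coeff_sum]
    have : ∀ k ∈ T, MvPolynomial.coeff (Finsupp.equivFunOnFinite.symm b)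
        (((c k : ℕ) : MvPolynomial β ℕ) * ∏ y : β, (MvPolynomial.X y : MvPolynomial β ℕ) ^ k y)
        = if k = b then c k else 0 := by
      intro k _
      rw [prod_X_pow, ← MvPolynomial.C_eq_coe_nat, MvPolynomial.C_mul_monomial,
        mul_one, MvPolynomial.coeff_monomial]
      congr 1
      simp only [eq_iff_iff]
      constructor
      · intro h; exact Finsupp.equivFunOnFinite.symm.injective h
      · intro h; rw [h]
    rw [Finset.sum_congr rfl this, Finset.sum_ite_eq' T b c, if_pos hbT]
  have h1 := key (fun k => ((univ : Finset (α → β)).filter fun f => cnt f = k).card)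
  have h2 := key (fun k => Nat.multinomial univ k)
  rw [← e1] at h1
  rw [← e2] at h2
  have hcb : ((univ : Finset (α → β)).filter fun f => cnt f = b).card
      = Nat.multinomial univ b := h1.symm.trans h2
  rw [← hcb]
  congr 1
  ext f
  simp only [Finset.mem_filter, Finset.mem_univ, true_and]
  exact ⟨fun h => funext h, fun h y => congrFun h y⟩


private lemma nat_ivt (f : ℕ → ℕ) (h0 : f 0 = 0) (hstep : ∀ q, f (q+1) ≤ f q + 1) :
    ∀ Q v, v ≤ f Q → ∃ q ≤ Q, f q = v := by
  intro Q
  induction Q with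
  | zero => intro v hv; exact ⟨0, le_refl 0, by omega⟩
  | succ Q ih =>
    intro v hv
    by_cases hvQ : v ≤ f Q
    · obtain ⟨q, hq, hfq⟩ := ih v hvQ
      exact ⟨q, by omega, hfq⟩
    · have := hstep Q
      exact ⟨Q+1, le_refl _, by omega⟩


private def ascP (K : ℕ) (σ : Equiv.Perm (Fin (K+1))) : Finset ℕ :=
  (range K).filter fun p => σ (p : Fin (K+1)) < σ ((p+1 : ℕ) : Fin (K+1))

private def jmp (K N : ℕ) (h : Fin (K+1) → Fin (N+1)) : Finset ℕ :=
  (range K).filter fun p => h (p : Fin (K+1)) < h ((p+1 : ℕ) : Fin (K+1))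

private def idxP (K : ℕ) (S : Finset ℕ) (t : ℕ) : ℕ :=
  ((range K \ S).filter (· < t)).card

private lemma filter_lt_succ' (s : Finset ℕ) (q : ℕ) :
    (s.filter (· < q+1)).card = (s.filter (· < q)).card + (if q ∈ s then 1 else 0) := by
  classical
  have : s.filter (· < q+1) = (s.filter (· < q)) ∪ s.filter (· = q) := by
    ext a
    simp only [mem_filter, mem_union, ← and_or_left]
    exact and_congr_right fun _ => by omega
  rw [this, card_union_of_disjoint]
  · congr 1
    by_cases hq : q ∈ s
    · rw [if_pos hq, filter_eq']; simp [hq]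
    · rw [if_neg hq, filter_eq']; simp [hq]
  · rw [disjoint_left]
    intro a ha hb
    simp only [mem_filter] at ha hb
    omega

private lemma mono_surj_val {K N : ℕ} {h : Fin (K+1) → Fin (N+1)} (hm : Monotone h)
    (hs : Function.Surjective h) :
    ∀ q, q ≤ K → (h (q : Fin (K+1)) : ℕ) = ((jmp K N h).filter (· < q)).card := by
  intro q
  induction q with
  | zero =>
    intro _
    have h0 : ((jmp K N h).filter (· < 0)) = ∅ := by
      apply Finset.filter_false_of_mem; intro a _; omega
    rw [h0, card_empty]
    obtain ⟨t0, ht0⟩ := hs 0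
    have h00 : ((0:ℕ) : Fin (K+1)) = 0 := by simp
    rw [h00]
    have : h 0 ≤ 0 := by
      calc h 0 ≤ h t0 := hm (Fin.zero_le t0)
      _ = 0 := ht0
    rw [Fin.le_zero_iff.1 this]
    rfl
  | succ q ih =>
    intro hq1
    have hqK : q < K := hq1
    have ihq := ih (by omega)
    rw [filter_lt_succ']
    have hvq : ((q : Fin (K+1)) : ℕ) = q := Fin.val_cast_of_lt (by omega)
    have hvq1 : (((q+1 : ℕ) : Fin (K+1)) : ℕ) = q + 1 := Fin.val_cast_of_lt (by omega)
    have hle : h (q : Fin (K+1)) ≤ h ((q+1 : ℕ) : Fin (K+1)) := by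
      apply hm; rw [Fin.le_def]; omega
    have hmem : q ∈ jmp K N h ↔ h (q : Fin (K+1)) < h ((q+1 : ℕ) : Fin (K+1)) := by
      simp [jmp, hqK]
    have hstep : (h ((q+1 : ℕ) : Fin (K+1)) : ℕ) ≤ (h (q : Fin (K+1)) : ℕ) + 1 := by
      by_contra hc
      push_neg at hc
      have hNb : (h ((q+1 : ℕ) : Fin (K+1)) : ℕ) ≤ N := Nat.lt_succ_iff.1 (Fin.is_lt _)
      set v : Fin (N+1) := ⟨(h (q : Fin (K+1)) : ℕ) + 1, by omega⟩ with hv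
      obtain ⟨t0, ht0⟩ := hs v
      have hvval : (v : ℕ) = (h (q : Fin (K+1)) : ℕ) + 1 := rfl
      rcases le_or_gt t0 (q : Fin (K+1)) with hlt | hgt
      · have := hm hlt
        rw [ht0, Fin.le_def] at this
        omega
      · have hble : ((q+1 : ℕ) : Fin (K+1)) ≤ t0 := by
          rw [Fin.le_def, hvq1]
          rw [Fin.lt_def, hvq] at hgt
          omega
        have := hm hble
        rw [ht0, Fin.le_def] at this
        omega
    by_cases hj : h (q : Fin (K+1)) < h ((q+1 : ℕ) : Fin (K+1))
    · rw [if_pos (hmem.2 hj), ← ihq]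
      rw [Fin.lt_def] at hj
      omega
    · rw [if_neg (fun hmm => hj (hmem.1 hmm)), ← ihq]
      have : h (q : Fin (K+1)) = h ((q+1 : ℕ) : Fin (K+1)) := le_antisymm hle (not_lt.1 hj)
      rw [← this]
      omega

private lemma jmp_card {K N : ℕ} {h : Fin (K+1) → Fin (N+1)} (hm : Monotone h)
    (hs : Function.Surjective h) : (jmp K N h).card = N := by
  have hKv := mono_surj_val hm hs K le_rfl
  have hfull : (jmp K N h).filter (· < K) = jmp K N h := by
    apply Finset.filter_true_of_mem
    intro a ha
    exact mem_range.1 (mem_filter.1 ha).1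
  rw [hfull] at hKv
  have hlast : h ((K : ℕ) : Fin (K+1)) = Fin.last N := by
    obtain ⟨t0, ht0⟩ := hs (Fin.last N)
    have h1 : (Fin.last N : Fin (N+1)) ≤ h ((K : ℕ) : Fin (K+1)) := by
      rw [← ht0]
      apply hm
      have : ((K : ℕ) : Fin (K+1)) = Fin.last K := by
        apply Fin.ext; simp [Fin.val_cast_of_lt]
      rw [this]
      exact Fin.le_last t0
    exact le_antisymm (Fin.le_last _) h1
  rw [hlast] at hKv
  simpa using hKv.symm

private lemma idxP_mono {K : ℕ} (S : Finset ℕ) {t t' : ℕ} (h : t ≤ t') :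
    idxP K S t ≤ idxP K S t' :=
  Finset.card_le_card (Finset.monotone_filter_right _ fun a _ (ha : a < t) => lt_of_lt_of_le ha h)

private lemma idxP_le {K : ℕ} {S : Finset ℕ} (hS : S ⊆ range K) (t : ℕ) :
    idxP K S t ≤ K - S.card := by
  calc idxP K S t ≤ (range K \ S).card := Finset.card_le_card (Finset.filter_subset _ _)
  _ = K - S.card := by rw [Finset.card_sdiff_of_subset hS, card_range]

private lemma idxP_succ (K : ℕ) (S : Finset ℕ) (q : ℕ) :
    idxP K S (q+1) = idxP K S q + (if q ∈ range K \ S then 1 else 0) :=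
  filter_lt_succ' _ q

private lemma idxP_zero (K : ℕ) (S : Finset ℕ) : idxP K S 0 = 0 := by
  unfold idxP
  rw [Finset.filter_false_of_mem (fun a _ => by omega), card_empty]

private lemma idxP_top {K : ℕ} {S : Finset ℕ} (hS : S ⊆ range K) :
    idxP K S K = K - S.card := by
  unfold idxP
  rw [Finset.filter_true_of_mem (fun a ha => mem_range.1 (mem_sdiff.1 ha).1),
    Finset.card_sdiff_of_subset hS, card_range]

private lemma idxP_surj {K : ℕ} {S : Finset ℕ} (hS : S ⊆ range K) :
    ∀ v ≤ K - S.card, ∃ q ≤ K, idxP K S q = v := by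
  intro v hv
  have := nat_ivt (idxP K S) (idxP_zero K S)
    (fun q => by rw [idxP_succ]; split <;> omega) K v (by rw [idxP_top hS]; exact hv)
  exact this

private lemma chainP {K : ℕ} {σ : Equiv.Perm (Fin (K+1))} {S : Finset ℕ}
    (hS : S ⊆ ascP K σ) :
    ∀ d q, 0 < d → q + d ≤ K → (∀ p, q ≤ p → p < q + d → p ∈ S) →
      σ (q : Fin (K+1)) < σ ((q+d : ℕ) : Fin (K+1)) := by
  intro d
  induction d with
  | zero => intro q h; omega
  | succ d ih =>
    intro q _ hqd hmem
    have hS' : ∀ p ∈ S, σ (p : Fin (K+1)) < σ ((p+1 : ℕ) : Fin (K+1)) := by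
      intro p hp
      exact (mem_filter.1 (hS hp)).2
    rcases Nat.eq_zero_or_pos d with hd0 | hd0
    · subst hd0
      exact hS' q (hmem q le_rfl (by omega))
    · have h1 := ih q hd0 (by omega) (fun p hp hp' => hmem p hp (by omega))
      have h2 := hS' (q+d) (hmem (q+d) (by omega) (by omega))
      calc σ (q : Fin (K+1)) < σ ((q+d : ℕ) : Fin (K+1)) := h1
      _ < σ ((q+(d+1) : ℕ) : Fin (K+1)) := by
        have : q + (d+1) = (q+d) + 1 := by omega
        rw [this]
        exact h2

private def gOf (K N : ℕ) (σ : Equiv.Perm (Fin (K+1))) (S : Finset ℕ) :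
    Fin (K+1) → Fin (N+1) :=
  fun t => ((idxP K S ((σ⁻¹ t : Fin (K+1)) : ℕ) : ℕ) : Fin (N+1))

private def sOf (K N : ℕ) (g : Fin (K+1) → Fin (N+1)) : Finset ℕ :=
  (range K).filter fun p =>
    g (Tuple.sort g (p : Fin (K+1))) = g (Tuple.sort g ((p+1 : ℕ) : Fin (K+1)))

section Bij

variable {K N : ℕ}

private lemma gOf_val (hNK : N ≤ K) {σ : Equiv.Perm (Fin (K+1))} {S : Finset ℕ}
    (hS : S ⊆ range K) (hcard : S.card = K - N) (t : Fin (K+1)) :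
    ((gOf K N σ S t) : ℕ) = idxP K S ((σ⁻¹ t : Fin (K+1)) : ℕ) := by
  apply Fin.val_cast_of_lt
  have := idxP_le hS ((σ⁻¹ t : Fin (K+1)) : ℕ)
  omega

private lemma gOf_surj (hNK : N ≤ K) {σ : Equiv.Perm (Fin (K+1))} {S : Finset ℕ}
    (hS : S ⊆ range K) (hcard : S.card = K - N) :
    Function.Surjective (gOf K N σ S) := by
  intro v
  have hv : (v : ℕ) ≤ K - S.card := by
    have := Fin.is_lt v; omega
  obtain ⟨q, hqK, hq⟩ := idxP_surj hS (v : ℕ) hv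
  refine ⟨σ (q : Fin (K+1)), ?_⟩
  apply Fin.ext
  rw [gOf_val hNK hS hcard]
  rw [Equiv.Perm.coe_inv, Equiv.symm_apply_apply]
  rw [Fin.val_cast_of_lt (by omega : q < K+1)]
  exact hq.trans rfl

private lemma sort_spec (g : Fin (K+1) → Fin (N+1)) :
    Monotone (g ∘ (Tuple.sort g : Equiv.Perm (Fin (K+1)))) ∧
      ∀ i j, i < j → g (Tuple.sort g i) = g (Tuple.sort g j) →
        Tuple.sort g i < Tuple.sort g j :=
  Tuple.eq_sort_iff.1 rfl

private lemma sOf_compl (g : Fin (K+1) → Fin (N+1)) :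
    range K \ sOf K N g = jmp K N (g ∘ (Tuple.sort g : Equiv.Perm (Fin (K+1)))) := by
  have hmono := (sort_spec g).1
  ext p
  simp only [mem_sdiff, mem_range, sOf, jmp, mem_filter, Function.comp_apply]
  constructor
  · rintro ⟨hpK, hns⟩
    refine ⟨hpK, ?_⟩
    have hne : ¬ (g (Tuple.sort g (p : Fin (K+1))) = g (Tuple.sort g ((p+1 : ℕ) : Fin (K+1)))) :=
      fun h => hns ⟨hpK, h⟩
    have hle : g (Tuple.sort g (p : Fin (K+1))) ≤ g (Tuple.sort g ((p+1 : ℕ) : Fin (K+1))) := by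
      apply hmono
      rw [Fin.le_def, Fin.val_cast_of_lt (by omega : p < K+1),
        Fin.val_cast_of_lt (by omega : p+1 < K+1)]
      omega
    exact lt_of_le_of_ne hle hne
  · rintro ⟨hpK, hlt⟩
    exact ⟨hpK, fun hmem => absurd hmem.2 (ne_of_lt hlt)⟩

private lemma sOf_card {g : Fin (K+1) → Fin (N+1)} (hg : Function.Surjective g) :
    (sOf K N g).card = K - N := by
  have hsub : sOf K N g ⊆ range K := filter_subset _ _
  have h1 : (range K \ sOf K N g).card = N := by
    rw [sOf_compl]
    exact jmp_card (sort_spec g).1 (hg.comp (Equiv.surjective _))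
  rw [card_sdiff_of_subset hsub, card_range] at h1
  have := card_le_card hsub
  rw [card_range] at this
  omega

private lemma sOf_subset_ascP (g : Fin (K+1) → Fin (N+1)) :
    sOf K N g ⊆ ascP K (Tuple.sort g) := by
  intro p hp
  simp only [sOf, mem_filter, mem_range] at hp
  simp only [ascP, mem_filter, mem_range]
  refine ⟨hp.1, ?_⟩
  apply (sort_spec g).2
  · rw [Fin.lt_def, Fin.val_cast_of_lt (by omega : p < K+1),
      Fin.val_cast_of_lt (by omega : p+1 < K+1)]
    omega
  · exact hp.2

private lemma roundA (hNK : N ≤ K) {g : Fin (K+1) → Fin (N+1)} (hg : Function.Surjective g) :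
    gOf K N (Tuple.sort g) (sOf K N g) = g := by
  have hsub : sOf K N g ⊆ range K := filter_subset _ _
  have hcard := sOf_card (K := K) (N := N) hg
  funext t
  apply Fin.ext
  rw [gOf_val hNK hsub hcard]
  set q : ℕ := (((Tuple.sort g : Equiv.Perm (Fin (K+1)))⁻¹ t : Fin (K+1)) : ℕ) with hq
  have hqK : q ≤ K := by have := Fin.is_lt ((Tuple.sort g : Equiv.Perm (Fin (K+1)))⁻¹ t); omega
  have h1 : idxP K (sOf K N g) q = ((jmp K N (g ∘ (Tuple.sort g : Equiv.Perm (Fin (K+1))))).filter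
      (· < q)).card := by
    unfold idxP
    rw [sOf_compl]
  rw [h1, ← mono_surj_val (sort_spec g).1 (hg.comp (Equiv.surjective _)) q hqK]
  simp only [Function.comp_apply]
  congr 1
  rw [hq, Fin.cast_val_eq_self, Equiv.Perm.coe_inv, Equiv.apply_symm_apply]

private lemma roundB (hNK : N ≤ K) {σ : Equiv.Perm (Fin (K+1))} {S : Finset ℕ}
    (hS : S ⊆ ascP K σ) (hcard : S.card = K - N) :
    Tuple.sort (gOf K N σ S) = σ ∧ sOf K N (gOf K N σ S) = S := by
  have hSr : S ⊆ range K := hS.trans (filter_subset _ _)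
  set g := gOf K N σ S with hgdef
  have hgv : ∀ t : Fin (K+1), (g t : ℕ) = idxP K S ((σ⁻¹ t : Fin (K+1)) : ℕ) :=
    gOf_val hNK hSr hcard
  have hgσ : ∀ t : Fin (K+1), (g (σ t) : ℕ) = idxP K S (t : ℕ) := by
    intro t
    rw [hgv, Equiv.Perm.coe_inv, Equiv.symm_apply_apply]
  have hsort : σ = Tuple.sort g := by
    rw [Tuple.eq_sort_iff]
    constructor
    · intro t t' htt'
      rw [Fin.le_def, Function.comp_apply, Function.comp_apply, hgσ, hgσ]
      exact idxP_mono S (Fin.le_def.1 htt')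
    · intro i j hij heq
      have hvij : (i : ℕ) < (j : ℕ) := Fin.lt_def.1 hij
      have heqv : idxP K S (i : ℕ) = idxP K S (j : ℕ) := by
        rw [← hgσ, ← hgσ, heq]
      have hmem : ∀ p, (i : ℕ) ≤ p → p < (j : ℕ) → p ∈ S := by
        intro p hp1 hp2
        have e1 : idxP K S p = idxP K S (p+1) := by
          have l1 := idxP_mono (K := K) S hp1
          have l2 := idxP_mono (K := K) S (by omega : p + 1 ≤ (j : ℕ))
          have l3 := idxP_mono (K := K) S (by omega : p ≤ p + 1)
          omega
        rw [idxP_succ] at e1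
        by_contra hns
        have hpr : p ∈ range K \ S := by
          rw [mem_sdiff, mem_range]
          have := Fin.is_lt j
          exact ⟨by omega, hns⟩
        rw [if_pos hpr] at e1
        omega
      have := chainP hS ((j : ℕ) - (i : ℕ)) (i : ℕ) (by omega)
        (by have := Fin.is_lt j; omega)
        (fun p hp1 hp2 => hmem p hp1 (by omega))
      have heq2 : ((i : ℕ) + ((j : ℕ) - (i : ℕ))) = (j : ℕ) := by omega
      rw [heq2, Fin.cast_val_eq_self, Fin.cast_val_eq_self] at this
      exact this
  refine ⟨hsort.symm, ?_⟩
  ext p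
  simp only [sOf, mem_filter, mem_range]
  constructor
  · rintro ⟨hpK, heq⟩
    rw [← hsort] at heq
    have : idxP K S p = idxP K S (p+1) := by
      have v1 := hgσ ((p : ℕ) : Fin (K+1))
      have v2 := hgσ (((p+1:ℕ) : ℕ) : Fin (K+1))
      rw [Fin.val_cast_of_lt (by omega : p < K+1)] at v1
      rw [Fin.val_cast_of_lt (by omega : p+1 < K+1)] at v2
      rw [Fin.ext_iff] at heq
      rw [v1, v2] at heq
      exact heq
    rw [idxP_succ] at this
    by_contra hns
    rw [if_pos (by rw [mem_sdiff, mem_range]; exact ⟨hpK, hns⟩)] at this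
    omega
  · intro hpS
    have hpK : p < K := mem_range.1 (hSr hpS)
    refine ⟨hpK, ?_⟩
    rw [← hsort]
    apply Fin.ext
    have v1 := hgσ ((p : ℕ) : Fin (K+1))
    have v2 := hgσ (((p+1:ℕ) : ℕ) : Fin (K+1))
    rw [Fin.val_cast_of_lt (by omega : p < K+1)] at v1
    rw [Fin.val_cast_of_lt (by omega : p+1 < K+1)] at v2
    rw [v1, v2, idxP_succ, if_neg (by rw [mem_sdiff]; tauto)]
    omega

private lemma card_X_eq_card_Y (hNK : N ≤ K) :
    ((univ : Finset (Equiv.Perm (Fin (K+1)))).sigma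
        fun σ => (ascP K σ).powersetCard (K - N)).card
      = ((univ : Finset (Fin (K+1) → Fin (N+1))).filter
          fun g => Function.Surjective g).card := by
  refine Finset.card_bij' (fun x _ => gOf K N x.1 x.2)
    (fun g _ => ⟨Tuple.sort g, sOf K N g⟩) ?_ ?_ ?_ ?_
  · rintro ⟨σ, S⟩ hx
    obtain ⟨hsub, hcard⟩ : S ⊆ ascP K σ ∧ S.card = K - N := by
      simpa [Finset.mem_sigma, Finset.mem_powersetCard] using hx
    exact mem_filter.2 ⟨mem_univ _, gOf_surj hNK (hsub.trans (filter_subset _ _)) hcard⟩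
  · intro g hg
    have hgs : Function.Surjective g := by simpa using hg
    exact mem_sigma.2 ⟨mem_univ _, mem_powersetCard.2 ⟨sOf_subset_ascP g, sOf_card hgs⟩⟩
  · rintro ⟨σ, S⟩ hx
    obtain ⟨hsub, hcard⟩ : S ⊆ ascP K σ ∧ S.card = K - N := by
      simpa [Finset.mem_sigma, Finset.mem_powersetCard] using hx
    obtain ⟨h1, h2⟩ := roundB hNK hsub hcard
    show (⟨Tuple.sort (gOf K N σ S), sOf K N (gOf K N σ S)⟩ :
      (_ : Equiv.Perm (Fin (K+1))) × Finset ℕ) = ⟨σ, S⟩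
    rw [h1, h2]
  · intro g hg
    have hgs : Function.Surjective g := by simpa using hg
    exact roundA hNK hgs

end Bij

/-- The Eulerian number `⟨k, i⟩`: the number of permutations of `{1, …, k}`
with exactly `i` ascents (positions where an element is greater than the
previous element). -/
def eulerian (k i : ℕ) : ℕ :=
  (Finset.univ.filter fun σ : Equiv.Perm (Fin k) =>
    (Finset.univ.filter fun q : Fin k × Fin k =>
      (q.2 : ℕ) = (q.1 : ℕ) + 1 ∧ σ q.1 < σ q.2).card = i).card

private lemma ascP_card_eq (K : ℕ) (σ : Equiv.Perm (Fin (K+1))) :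
    (Finset.univ.filter fun q : Fin (K+1) × Fin (K+1) =>
      (q.2 : ℕ) = (q.1 : ℕ) + 1 ∧ σ q.1 < σ q.2).card = (ascP K σ).card := by
  refine Finset.card_bij' (fun q _ => (q.1 : ℕ))
    (fun p _ => (((p : ℕ) : Fin (K+1)), ((p+1 : ℕ) : Fin (K+1)))) ?_ ?_ ?_ ?_
  · rintro ⟨q1, q2⟩ hq
    rw [mem_filter] at hq
    obtain ⟨-, h1, h2⟩ := hq
    dsimp only at h1 h2
    have hq2 := Fin.is_lt q2
    have hlt : (q1 : ℕ) < K := by omega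
    rw [ascP, mem_filter, mem_range]
    refine ⟨hlt, ?_⟩
    have e1 : (((q1 : ℕ) : ℕ) : Fin (K+1)) = q1 := Fin.cast_val_eq_self q1
    have e2 : (((q1 : ℕ) + 1 : ℕ) : Fin (K+1)) = q2 := by
      apply Fin.ext
      rw [Fin.val_cast_of_lt (by omega)]
      omega
    rw [e1, e2]
    exact h2
  · intro p hp
    rw [ascP, mem_filter, mem_range] at hp
    rw [mem_filter]
    refine ⟨mem_univ _, ?_, ?_⟩
    · simp only []
      rw [Fin.val_cast_of_lt (by omega : p+1 < K+1), Fin.val_cast_of_lt (by omega : p < K+1)]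
    · exact hp.2
  · rintro ⟨q1, q2⟩ hq
    rw [mem_filter] at hq
    obtain ⟨-, h1, h2⟩ := hq
    dsimp only at h1 h2
    have hq2 := Fin.is_lt q2
    dsimp only
    rw [Fin.cast_val_eq_self]
    congr 1
    apply Fin.ext
    rw [Fin.val_cast_of_lt (by omega)]
    omega
  · intro p hp
    rw [ascP, mem_filter, mem_range] at hp
    simp only []
    rw [Fin.val_cast_of_lt (by omega : p < K+1)]

private lemma eulerian_eq (K j : ℕ) :
    eulerian (K+1) j = ((univ : Finset (Equiv.Perm (Fin (K+1)))).filter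
      fun σ => (ascP K σ).card = j).card := by
  unfold eulerian
  congr 1
  ext σ
  rw [mem_filter, mem_filter, ascP_card_eq]

private lemma eulerian_sum (K N : ℕ) :
    ∑ j ∈ range (K+2), eulerian (K+1) j * Nat.choose j (K-N)
      = ∑ σ : Equiv.Perm (Fin (K+1)), Nat.choose (ascP K σ).card (K-N) := by
  have hmaps : ∀ σ : Equiv.Perm (Fin (K+1)), σ ∈ (univ : Finset (Equiv.Perm (Fin (K+1)))) →
      (ascP K σ).card ∈ range (K+2) := by
    intro σ _
    rw [mem_range]
    have : (ascP K σ).card ≤ K := by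
      calc (ascP K σ).card ≤ (range K).card := card_le_card (filter_subset _ _)
      _ = K := card_range K
    omega
  rw [← Finset.sum_fiberwise_of_maps_to hmaps (fun σ => Nat.choose (ascP K σ).card (K-N))]
  refine Finset.sum_congr rfl fun j _ => ?_
  rw [eulerian_eq]
  have : ∀ σ ∈ (univ : Finset (Equiv.Perm (Fin (K+1)))).filter fun σ => (ascP K σ).card = j,
      Nat.choose (ascP K σ).card (K-N) = Nat.choose j (K-N) := by
    intro σ hσ
    rw [(mem_filter.1 hσ).2]
  rw [Finset.sum_congr rfl this, Finset.sum_const, smul_eq_mul, mul_comm]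

private def AnSet (K N : ℕ) : Finset (Fin (N+1) → ℕ) :=
  (Fintype.piFinset fun _ : Fin (N+1) => range (K+2)).filter
    fun a => (∑ i, a i = K+1) ∧ ∀ i, 0 < a i

private lemma card_Y_eq (K N : ℕ) :
    ((univ : Finset (Fin (K+1) → Fin (N+1))).filter fun g => Function.Surjective g).card
      = ∑ a ∈ AnSet K N, Nat.multinomial univ a := by
  classical
  set cntY : (Fin (K+1) → Fin (N+1)) → (Fin (N+1) → ℕ) :=
    fun g i => ((univ : Finset (Fin (K+1))).filter fun t => g t = i).card with hcntY
  have hmaps : ∀ g ∈ (univ : Finset (Fin (K+1) → Fin (N+1))).filter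
      fun g => Function.Surjective g, cntY g ∈ AnSet K N := by
    intro g hg
    have hgs : Function.Surjective g := (mem_filter.1 hg).2
    rw [AnSet, mem_filter, Fintype.mem_piFinset]
    refine ⟨fun i => ?_, ?_, fun i => ?_⟩
    · rw [mem_range]
      have : cntY g i ≤ K+1 := by
        calc cntY g i ≤ (univ : Finset (Fin (K+1))).card := card_le_card (filter_subset _ _)
        _ = K+1 := by rw [card_univ, Fintype.card_fin]
      omega
    · rw [← Finset.card_eq_sum_card_fiberwise (fun t _ => mem_univ (g t)),
        card_univ, Fintype.card_fin]
    · obtain ⟨t, ht⟩ := hgs i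
      exact Finset.card_pos.2 ⟨t, mem_filter.2 ⟨mem_univ t, ht⟩⟩
  rw [Finset.card_eq_sum_card_fiberwise hmaps]
  refine Finset.sum_congr rfl fun a ha => ?_
  rw [AnSet, mem_filter] at ha
  have hset : (((univ : Finset (Fin (K+1) → Fin (N+1))).filter fun g => Function.Surjective g).filter
      fun g => cntY g = a)
      = (univ : Finset (Fin (K+1) → Fin (N+1))).filter
        fun g => ∀ y, ((univ : Finset (Fin (K+1))).filter fun t => g t = y).card = a y := by
    ext g
    rw [mem_filter, mem_filter, mem_filter]
    constructor
    · rintro ⟨⟨-, -⟩, hc⟩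
      exact ⟨mem_univ _, fun y => by rw [← hc]⟩
    · rintro ⟨-, hc⟩
      refine ⟨⟨mem_univ _, ?_⟩, funext hc⟩
      intro i
      have := ha.2.2 i
      rw [← hc i] at this
      obtain ⟨t, ht⟩ := Finset.card_pos.1 this
      exact ⟨t, (mem_filter.1 ht).2⟩
  rw [hset]
  have hb : ∑ y : Fin (N+1), a y = Fintype.card (Fin (K+1)) := by
    rw [ha.2.1, Fintype.card_fin]
  have hres := card_count_eq_multinomial a hb
  rw [← hres]
  congr 1
  ext g
  simp only [Finset.mem_filter]

private lemma main_count {K N : ℕ} (hNK : N ≤ K) :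
    ∑ j ∈ range (K+2), eulerian (K+1) j * Nat.choose j (K-N)
      = ∑ a ∈ AnSet K N, Nat.multinomial univ a := by
  rw [eulerian_sum K N, ← card_Y_eq K N, ← card_X_eq_card_Y hNK]
  rw [Finset.card_sigma]
  refine Finset.sum_congr rfl fun σ _ => ?_
  rw [Finset.card_powersetCard]

private def MnSet (K N : ℕ) : Finset (Fin (K+1) → ℕ) :=
  (Fintype.piFinset fun _ : Fin (K+1) => range (K+2)).filter
    fun m => (∑ j : Fin (K+1), ((j : ℕ)+1) * m j = K+1) ∧ (∑ j : Fin (K+1), m j = N+1)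

private def profF (K N : ℕ) (a : Fin (N+1) → ℕ) : Fin (K+1) → ℕ :=
  fun j => ((univ : Finset (Fin (N+1))).filter fun i => a i = (j : ℕ)+1).card

private def Fmap (K N : ℕ) (a : Fin (N+1) → ℕ) : Fin (N+1) → Fin (K+1) :=
  fun i => ⟨min (a i - 1) K, by omega⟩

section Profile

variable {K N : ℕ}

private lemma AnSet_mem {a : Fin (N+1) → ℕ} (ha : a ∈ AnSet K N) :
    (∀ i, a i ≤ K+1) ∧ (∑ i, a i = K+1) ∧ (∀ i, 0 < a i) := by
  rw [AnSet, mem_filter, Fintype.mem_piFinset] at ha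
  exact ⟨fun i => by have := ha.1 i; rw [mem_range] at this; omega, ha.2.1, ha.2.2⟩

private lemma Fmap_val {a : Fin (N+1) → ℕ} (ha : a ∈ AnSet K N) (i : Fin (N+1)) :
    (Fmap K N a i : ℕ) = a i - 1 := by
  obtain ⟨h1, _, _⟩ := AnSet_mem ha
  show min (a i - 1) K = a i - 1
  have := h1 i
  omega

private lemma Fmap_fiber {a : Fin (N+1) → ℕ} (ha : a ∈ AnSet K N) (j : Fin (K+1)) :
    ((univ : Finset (Fin (N+1))).filter fun i => Fmap K N a i = j)
      = (univ : Finset (Fin (N+1))).filter fun i => a i = (j : ℕ)+1 := by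
  obtain ⟨h1, _, h3⟩ := AnSet_mem ha
  ext i
  simp only [mem_filter, mem_univ, true_and]
  rw [Fin.ext_iff, Fmap_val ha]
  have := h3 i
  omega

private lemma profF_eq_fiber {a : Fin (N+1) → ℕ} (ha : a ∈ AnSet K N) (j : Fin (K+1)) :
    profF K N a j = ((univ : Finset (Fin (N+1))).filter fun i => Fmap K N a i = j).card := by
  rw [Fmap_fiber ha]; rfl

private lemma profF_mem (hNK : N ≤ K) {a : Fin (N+1) → ℕ} (ha : a ∈ AnSet K N) :
    profF K N a ∈ MnSet K N := by
  obtain ⟨h1, h2, h3⟩ := AnSet_mem ha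
  rw [MnSet, mem_filter, Fintype.mem_piFinset]
  refine ⟨fun j => ?_, ?_, ?_⟩
  · rw [mem_range]
    have : profF K N a j ≤ N+1 := by
      calc profF K N a j ≤ (univ : Finset (Fin (N+1))).card :=
        card_le_card (filter_subset _ _)
      _ = N+1 := by rw [card_univ, Fintype.card_fin]
    omega
  · have hsum := Finset.sum_fiberwise_of_maps_to
      (fun i (_ : i ∈ (univ : Finset (Fin (N+1)))) => mem_univ (Fmap K N a i)) a
    calc ∑ j : Fin (K+1), ((j : ℕ)+1) * profF K N a j
        = ∑ j : Fin (K+1), ∑ i ∈ (univ : Finset (Fin (N+1))).filter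
            (fun i => Fmap K N a i = j), a i := by
          refine Finset.sum_congr rfl fun j _ => ?_
          have hinner : ∀ i ∈ (univ : Finset (Fin (N+1))).filter fun i => Fmap K N a i = j,
              a i = (j : ℕ)+1 := by
            intro i hi
            rw [Fmap_fiber ha] at hi
            exact (mem_filter.1 hi).2
          rw [Finset.sum_congr rfl hinner, Finset.sum_const, smul_eq_mul,
            profF_eq_fiber ha, mul_comm]
      _ = ∑ i, a i := hsum
      _ = K+1 := h2
  · have hsum := Finset.sum_fiberwise_of_maps_to
      (fun i (_ : i ∈ (univ : Finset (Fin (N+1)))) => mem_univ (Fmap K N a i))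
      (fun _ : Fin (N+1) => 1)
    calc ∑ j : Fin (K+1), profF K N a j
        = ∑ j : Fin (K+1), ∑ _i ∈ (univ : Finset (Fin (N+1))).filter
            (fun i => Fmap K N a i = j), 1 := by
          refine Finset.sum_congr rfl fun j _ => ?_
          rw [Finset.sum_const, smul_eq_mul, mul_one, profF_eq_fiber ha]
      _ = ∑ _i : Fin (N+1), 1 := hsum
      _ = N+1 := by rw [Finset.sum_const, smul_eq_mul, mul_one, card_univ, Fintype.card_fin]

private lemma profF_card_bij (m : Fin (K+1) → ℕ)
    (hm1 : ∑ j : Fin (K+1), ((j : ℕ)+1) * m j = K+1) :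
    ((AnSet K N).filter fun a => profF K N a = m).card
      = ((univ : Finset (Fin (N+1) → Fin (K+1))).filter
          fun f => ∀ y, ((univ : Finset (Fin (N+1))).filter fun x => f x = y).card = m y).card := by
  refine Finset.card_bij' (fun a _ => Fmap K N a) (fun f _ => fun i => (f i : ℕ) + 1)
    ?_ ?_ ?_ ?_
  · intro a ha
    rw [mem_filter] at ha
    refine mem_filter.2 ⟨mem_univ _, fun j => ?_⟩
    rw [← profF_eq_fiber ha.1, ha.2]
  · intro f hf
    have hfib : ∀ y, ((univ : Finset (Fin (N+1))).filter fun x => f x = y).card = m y :=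
      (mem_filter.1 hf).2
    have hb1 : ∀ i : Fin (N+1), (f i : ℕ) + 1 ≤ K + 1 := by
      intro i; have := Fin.is_lt (f i); omega
    have hbsum : ∑ i : Fin (N+1), ((f i : ℕ) + 1) = K+1 := by
      have hsum := Finset.sum_fiberwise_of_maps_to
        (fun i (_ : i ∈ (univ : Finset (Fin (N+1)))) => mem_univ (f i))
        (fun i => (f i : ℕ) + 1)
      calc ∑ i : Fin (N+1), ((f i : ℕ) + 1)
          = ∑ j : Fin (K+1), ∑ i ∈ (univ : Finset (Fin (N+1))).filter
              (fun i => f i = j), ((f i : ℕ) + 1) := hsum.symm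
        _ = ∑ j : Fin (K+1), ((j : ℕ)+1) * m j := by
            refine Finset.sum_congr rfl fun j _ => ?_
            have hinner : ∀ i ∈ (univ : Finset (Fin (N+1))).filter fun i => f i = j,
                (f i : ℕ) + 1 = (j : ℕ) + 1 := by
              intro i hi
              rw [(mem_filter.1 hi).2]
            rw [Finset.sum_congr rfl hinner, Finset.sum_const, smul_eq_mul, hfib j, mul_comm]
        _ = K+1 := hm1
    refine mem_filter.2 ⟨?_, ?_⟩
    · simp only [AnSet, mem_filter, Fintype.mem_piFinset, mem_range]
      refine ⟨?_, hbsum, fun i => Nat.succ_pos _⟩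
      intro i
      have := hb1 i
      omega
    · funext j
      have : ((univ : Finset (Fin (N+1))).filter
          fun i => (fun i => (f i : ℕ) + 1) i = (j : ℕ)+1)
          = (univ : Finset (Fin (N+1))).filter fun x => f x = j := by
        ext i
        simp only [mem_filter, mem_univ, true_and]
        rw [Fin.ext_iff]
        omega
      calc profF K N (fun i => (f i : ℕ) + 1) j
          = ((univ : Finset (Fin (N+1))).filter
              fun i => (fun i => (f i : ℕ) + 1) i = (j : ℕ)+1).card := rfl
        _ = ((univ : Finset (Fin (N+1))).filter fun x => f x = j).card := by rw [this]
        _ = m j := hfib j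
  · intro a ha
    rw [mem_filter] at ha
    funext i
    have hv := Fmap_val ha.1 i
    have := (AnSet_mem ha.1).2.2 i
    show (Fmap K N a i : ℕ) + 1 = a i
    omega
  · intro f hf
    funext i
    apply Fin.ext
    show min ((f i : ℕ) + 1 - 1) K = (f i : ℕ)
    have := Fin.is_lt (f i)
    omega

private lemma profF_fiber_card {m : Fin (K+1) → ℕ} (hm : m ∈ MnSet K N) :
    ((AnSet K N).filter fun a => profF K N a = m).card = Nat.multinomial univ m := by
  classical
  rw [MnSet, mem_filter, Fintype.mem_piFinset] at hm
  have hres := card_count_eq_multinomial (α := Fin (N+1)) (β := Fin (K+1)) m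
    (by rw [hm.2.2, Fintype.card_fin])
  rw [profF_card_bij m hm.2.1]
  refine Eq.trans ?_ hres
  congr 1
  ext f
  simp only [Finset.mem_filter]

private lemma multinomial_cast_real {n : ℕ} (a : Fin n → ℕ) :
    (Nat.multinomial univ a : ℝ)
      = ((∑ i, a i).factorial : ℝ) / ∏ i, ((a i).factorial : ℝ) := by
  have hspec := Nat.multinomial_spec (univ : Finset (Fin n)) a
  have hcast : (∏ i, ((a i).factorial : ℝ)) * (Nat.multinomial univ a : ℝ)
      = ((∑ i, a i).factorial : ℝ) := by
    rw [← Nat.cast_prod, ← Nat.cast_mul, hspec]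
  have hne : (∏ i, ((a i).factorial : ℝ)) ≠ 0 :=
    Finset.prod_ne_zero_iff.2 fun i _ => Nat.cast_ne_zero.2 (Nat.factorial_ne_zero _)
  field_simp
  linarith [hcast]

private lemma sum_An (hNK : N ≤ K) :
    (∑ a ∈ AnSet K N, (Nat.multinomial univ a : ℝ))
      = ∑ m ∈ MnSet K N, (Nat.multinomial univ m : ℝ) *
          (((K+1).factorial : ℝ) / ∏ j : Fin (K+1), ((((j:ℕ)+1).factorial : ℝ)) ^ (m j)) := by
  classical
  rw [← Finset.sum_fiberwise_of_maps_to (fun a ha => profF_mem hNK ha)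
    (fun a => (Nat.multinomial univ a : ℝ))]
  refine Finset.sum_congr rfl fun m hm => ?_
  have hconst : ∀ a ∈ (AnSet K N).filter fun a => profF K N a = m,
      (Nat.multinomial univ a : ℝ)
        = ((K+1).factorial : ℝ) / ∏ j : Fin (K+1), ((((j:ℕ)+1).factorial : ℝ)) ^ (m j) := by
    intro a ha
    rw [mem_filter] at ha
    obtain ⟨h1, h2, h3⟩ := AnSet_mem ha.1
    rw [multinomial_cast_real, h2]
    congr 1
    have hprod := Finset.prod_fiberwise_of_maps_to
      (fun i (_ : i ∈ (univ : Finset (Fin (N+1)))) => mem_univ (Fmap K N a i))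
      (fun i => ((a i).factorial : ℝ))
    calc ∏ i, ((a i).factorial : ℝ)
        = ∏ j : Fin (K+1), ∏ i ∈ (univ : Finset (Fin (N+1))).filter
            (fun i => Fmap K N a i = j), ((a i).factorial : ℝ) := hprod.symm
      _ = ∏ j : Fin (K+1), ((((j:ℕ)+1).factorial : ℝ)) ^ (m j) := by
          refine Finset.prod_congr rfl fun j _ => ?_
          have hinner : ∀ i ∈ (univ : Finset (Fin (N+1))).filter fun i => Fmap K N a i = j,
              ((a i).factorial : ℝ) = ((((j:ℕ)+1).factorial : ℝ)) := by
            intro i hi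
            rw [Fmap_fiber ha.1] at hi
            rw [(mem_filter.1 hi).2]
          rw [Finset.prod_congr rfl hinner, Finset.prod_const, ← profF_eq_fiber ha.1, ha.2]
  rw [Finset.sum_congr rfl hconst, Finset.sum_const, nsmul_eq_mul, profF_fiber_card hm]

end Profile

private lemma binom_expand (K j : ℕ) (hj : j ≤ K+1) (x : ℝ) :
    x^(K+1-j) * (1+x)^j = ∑ n ∈ range (K+2), (Nat.choose j (K+1-n) : ℝ) * x^n := by
  rw [← Finset.sum_range_reflect (fun n => (Nat.choose j (K+1-n) : ℝ) * x^n) (K+2)]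
  have hsimp : ∀ i ∈ range (K+2), (Nat.choose j (K+1-(K+2-1-i)) : ℝ) * x^(K+2-1-i)
      = (Nat.choose j i : ℝ) * x^(K+1-i) := by
    intro i hi
    rw [mem_range] at hi
    have e1 : K+1-(K+2-1-i) = i := by omega
    have e2 : K+2-1-i = K+1-i := by omega
    rw [e1, e2]
  rw [Finset.sum_congr rfl hsimp]
  have hsub : ∑ i ∈ range (K+2), (Nat.choose j i : ℝ) * x^(K+1-i)
      = ∑ i ∈ range (j+1), (Nat.choose j i : ℝ) * x^(K+1-i) := by
    symm
    apply Finset.sum_subset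
    · intro i hi
      rw [mem_range] at *
      omega
    · intro i _ hi
      rw [mem_range] at hi
      rw [Nat.choose_eq_zero_of_lt (by omega)]
      simp
  rw [hsub, add_pow, Finset.mul_sum]
  refine Finset.sum_congr rfl fun i hi => ?_
  rw [mem_range] at hi
  calc x^(K+1-j) * ((1:ℝ)^i * x^(j-i) * (Nat.choose j i : ℝ))
      = (Nat.choose j i : ℝ) * (x^(K+1-j) * x^(j-i)) := by ring
    _ = (Nat.choose j i : ℝ) * x^(K+1-i) := by
        rw [← pow_add]
        have : K+1-j + (j-i) = K+1-i := by omega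
        rw [this]

private lemma eulerian_top (K : ℕ) : eulerian (K+1) (K+1) = 0 := by
  rw [eulerian_eq, Finset.card_eq_zero, Finset.filter_eq_empty_iff]
  intro σ _
  have h1 : (ascP K σ).card ≤ K := by
    calc (ascP K σ).card ≤ (range K).card := card_le_card (filter_subset _ _)
    _ = K := card_range K
  omega

/-- Lemma 6.3 of the paper: for `k ≥ 1` and `0 < p < 1`,
`(1/k!) (p/(1-p))^k ∑_{j=0}^k ⟨k,j⟩ p^{-j}
  = ∑_{m ∈ R(k)} (m_1+⋯+m_k choose m_1,…,m_k) (1-p)^{-|m|} ∏_{j=1}^k p^{m_j}/(j!)^{m_j}`,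
where `R(k) = {m ∈ ℕ^k : 1·m_1 + 2·m_2 + ⋯ + k·m_k = k}`. -/
theorem eulerian_partition_identity (k : ℕ) (hk : 1 ≤ k) (p : ℝ)
    (hp : 0 < p) (hp1 : p < 1) :
    (1 / (Nat.factorial k : ℝ)) * (p / (1 - p)) ^ k *
        ∑ j ∈ Finset.range (k + 1), (eulerian k j : ℝ) * p⁻¹ ^ j
      = ∑ m ∈ (Fintype.piFinset fun _ : Fin k => Finset.range (k + 1)).filter
            (fun m : Fin k → ℕ => ∑ j : Fin k, ((j : ℕ) + 1) * m j = k),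
          (Nat.multinomial Finset.univ m : ℝ) * ((1 - p)⁻¹) ^ (∑ j : Fin k, m j) *
            ∏ j : Fin k, p ^ (m j) / ((Nat.factorial ((j : ℕ) + 1) : ℝ)) ^ (m j) := by
  obtain ⟨K, rfl⟩ : ∃ K, k = K + 1 := ⟨k - 1, by omega⟩
  simp only [show K+1+1 = K+2 from rfl]
  have h1p : (0:ℝ) < 1 - p := by linarith
  have h1p' : (1:ℝ) - p ≠ 0 := ne_of_gt h1p
  have hp' : p ≠ 0 := ne_of_gt hp
  have hkf0 : ((K+1).factorial : ℝ) ≠ 0 := Nat.cast_ne_zero.2 (Nat.factorial_ne_zero _)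
  have hW0 : ∀ m : Fin (K+1) → ℕ,
      (∏ j : Fin (K+1), ((((j:ℕ)+1).factorial : ℝ)) ^ (m j)) ≠ 0 :=
    fun m => Finset.prod_ne_zero_iff.2 fun j _ =>
      pow_ne_zero _ (Nat.cast_ne_zero.2 (Nat.factorial_ne_zero _))
  set x : ℝ := p / (1 - p) with hxdef
  have hx1 : 1 + x = (1 - p)⁻¹ := by rw [hxdef]; field_simp; ring
  have hxp : x * p⁻¹ = 1 + x := by rw [hx1, hxdef]; field_simp
  have hpx2 : (1-p)⁻¹ * p = x := by rw [hxdef]; field_simp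
  set R : Finset (Fin (K+1) → ℕ) :=
    (Fintype.piFinset fun _ : Fin (K+1) => Finset.range (K+2)).filter
      (fun m : Fin (K+1) → ℕ => ∑ j : Fin (K+1), ((j : ℕ) + 1) * m j = K+1) with hR
  -- LHS transformation
  have hterm : ∀ j ∈ range (K+2),
      (1 / ((K+1).factorial : ℝ)) * x^(K+1) * ((eulerian (K+1) j : ℝ) * p⁻¹ ^ j)
      = ∑ n ∈ range (K+2),
          (eulerian (K+1) j : ℝ) * (Nat.choose j (K+1-n) : ℝ) * x^n
            / ((K+1).factorial : ℝ) := by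
    intro j hj
    rw [mem_range] at hj
    have hj' : j ≤ K+1 := by omega
    have e1 : x^(K+1) = x^(K+1-j) * x^j := by
      rw [← pow_add]
      congr 1
      omega
    have e2 : x^(K+1) * p⁻¹^j = x^(K+1-j) * (1+x)^j := by
      rw [e1, mul_assoc, ← mul_pow, hxp]
    calc (1 / ((K+1).factorial : ℝ)) * x^(K+1) * ((eulerian (K+1) j : ℝ) * p⁻¹ ^ j)
        = (eulerian (K+1) j : ℝ) * (x^(K+1) * p⁻¹^j) / ((K+1).factorial : ℝ) := by ring
      _ = (eulerian (K+1) j : ℝ) * (∑ n ∈ range (K+2), (Nat.choose j (K+1-n) : ℝ) * x^n)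
            / ((K+1).factorial : ℝ) := by rw [e2, binom_expand K j hj' x]
      _ = ∑ n ∈ range (K+2), (eulerian (K+1) j : ℝ) * (Nat.choose j (K+1-n) : ℝ) * x^n
            / ((K+1).factorial : ℝ) := by
          rw [Finset.mul_sum, Finset.sum_div]
          refine Finset.sum_congr rfl fun n _ => ?_
          ring
  have hLHS : (1 / ((K+1).factorial : ℝ)) * x ^ (K+1) *
        ∑ j ∈ range (K+2), (eulerian (K+1) j : ℝ) * p⁻¹ ^ j
      = ∑ n ∈ range (K+2),
          (∑ j ∈ range (K+2), (eulerian (K+1) j : ℝ) * (Nat.choose j (K+1-n) : ℝ)) * x^n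
            / ((K+1).factorial : ℝ) := by
    rw [Finset.mul_sum, Finset.sum_congr rfl hterm, Finset.sum_comm]
    refine Finset.sum_congr rfl fun n _ => ?_
    rw [← Finset.sum_div, ← Finset.sum_mul]
  -- RHS transformation
  have hterm2 : ∀ m ∈ R,
      (Nat.multinomial Finset.univ m : ℝ) * ((1 - p)⁻¹) ^ (∑ j : Fin (K+1), m j) *
          ∏ j : Fin (K+1), p ^ (m j) / ((((j:ℕ)+1).factorial : ℝ)) ^ (m j)
      = (Nat.multinomial Finset.univ m : ℝ) * x ^ (∑ j : Fin (K+1), m j)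
          / ∏ j : Fin (K+1), ((((j:ℕ)+1).factorial : ℝ)) ^ (m j) := by
    intro m _
    have e1 : ∏ j : Fin (K+1), p ^ (m j) / ((((j:ℕ)+1).factorial : ℝ)) ^ (m j)
        = p ^ (∑ j : Fin (K+1), m j)
            / ∏ j : Fin (K+1), ((((j:ℕ)+1).factorial : ℝ)) ^ (m j) := by
      rw [Finset.prod_div_distrib, Finset.prod_pow_eq_pow_sum]
    rw [e1]
    calc (Nat.multinomial Finset.univ m : ℝ) * ((1 - p)⁻¹) ^ (∑ j : Fin (K+1), m j) *
          (p ^ (∑ j : Fin (K+1), m j)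
            / ∏ j : Fin (K+1), ((((j:ℕ)+1).factorial : ℝ)) ^ (m j))
        = (Nat.multinomial Finset.univ m : ℝ) *
            (((1 - p)⁻¹) ^ (∑ j : Fin (K+1), m j) * p ^ (∑ j : Fin (K+1), m j))
            / ∏ j : Fin (K+1), ((((j:ℕ)+1).factorial : ℝ)) ^ (m j) := by ring
      _ = (Nat.multinomial Finset.univ m : ℝ) * x ^ (∑ j : Fin (K+1), m j)
            / ∏ j : Fin (K+1), ((((j:ℕ)+1).factorial : ℝ)) ^ (m j) := by
          rw [← mul_pow, hpx2]
  have hmaps : ∀ m ∈ R, (∑ j : Fin (K+1), m j) ∈ range (K+2) := by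
    intro m hm
    rw [hR, mem_filter] at hm
    rw [mem_range]
    have : ∑ j : Fin (K+1), m j ≤ ∑ j : Fin (K+1), ((j : ℕ)+1) * m j :=
      Finset.sum_le_sum fun j _ => Nat.le_mul_of_pos_left (m j) (Nat.succ_pos _)
    omega
  have hRHS : (∑ m ∈ R,
        (Nat.multinomial Finset.univ m : ℝ) * ((1 - p)⁻¹) ^ (∑ j : Fin (K+1), m j) *
          ∏ j : Fin (K+1), p ^ (m j) / ((((j:ℕ)+1).factorial : ℝ)) ^ (m j))
      = ∑ n ∈ range (K+2), ∑ m ∈ R.filter (fun m => ∑ j : Fin (K+1), m j = n),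
          (Nat.multinomial Finset.univ m : ℝ) * x ^ n
            / ∏ j : Fin (K+1), ((((j:ℕ)+1).factorial : ℝ)) ^ (m j) := by
    rw [Finset.sum_congr rfl hterm2, ← Finset.sum_fiberwise_of_maps_to hmaps]
    refine Finset.sum_congr rfl fun n _ => Finset.sum_congr rfl fun m hm => ?_
    rw [(mem_filter.1 hm).2]
  rw [hLHS, hRHS]
  refine Finset.sum_congr rfl fun n hn => ?_
  rw [mem_range] at hn
  match n with
  | 0 =>
    have hz1 : R.filter (fun m => ∑ j : Fin (K+1), m j = 0) = ∅ := by
      rw [Finset.filter_eq_empty_iff]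
      intro m hm
      rw [hR, mem_filter] at hm
      intro hzero
      have : ∀ j : Fin (K+1), m j = 0 := by
        intro j
        have := Finset.sum_eq_zero_iff.1 hzero j (mem_univ j)
        exact this
      have : ∑ j : Fin (K+1), ((j : ℕ)+1) * m j = 0 :=
        Finset.sum_eq_zero fun j _ => by rw [this j, mul_zero]
      omega
    rw [hz1, Finset.sum_empty]
    have hz2 : ∀ j ∈ range (K+2), (eulerian (K+1) j : ℝ) * (Nat.choose j (K+1-0) : ℝ) = 0 := by
      intro j hj
      rw [mem_range] at hj
      by_cases hjK : j = K+1
      · rw [hjK, eulerian_top]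
        simp
      · rw [Nat.sub_zero, Nat.choose_eq_zero_of_lt (by omega)]
        simp
    rw [Finset.sum_eq_zero hz2]
    simp
  | (N+1) =>
    have hNK : N ≤ K := by omega
    have hsub : K+1-(N+1) = K-N := by omega
    have hMn : R.filter (fun m => ∑ j : Fin (K+1), m j = N+1) = MnSet K N := by
      rw [hR, MnSet]
      ext m
      simp only [mem_filter, Fintype.mem_piFinset]
      tauto
    rw [hsub, hMn]
    have hcast : (∑ j ∈ range (K+2), (eulerian (K+1) j : ℝ) * (Nat.choose j (K-N) : ℝ))
        = ∑ a ∈ AnSet K N, (Nat.multinomial Finset.univ a : ℝ) := by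
      exact_mod_cast congrArg (Nat.cast (R := ℝ)) (main_count hNK)
    rw [hcast, sum_An hNK, Finset.sum_mul, Finset.sum_div]
    refine Finset.sum_congr rfl fun m hm => ?_
    have := hW0 m
    field_simp
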